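/- Consider the binary encoding that maps a message (x1, x2, y1, y2, z1, z2, t1, t2) ∈ (ZMod 2)^8 to node contents n1 = (x1, x2, y1+z2+t1+t2), n2 = (y1, y2, z1+t2+x1+x2), n3 = (z1, z2, t1+x2+y1+y2), n4 = (t1, t2, x1+y2+z1+z2) in (ZMod 2)^3. There exist functions g2, g3, g4 : (ZMod 2)^3 → (ZMod 2)^2 and a function h : ((ZMod 2)^2)^3 → (ZMod 2)^3 such that for every message, h(g2(n2), g3(n3), g4(n4)) = n1; moreover one may take g2(n2) = (y1, z1+t2+x1+x2+y1+y2), g3(n3) = (z2, t1+x2+y1+y2+z1+z2), g4(n4) = (t1+t2, x1+y2+z1+z2+t2), each of which is a function of the respective node's stored content alone. -/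

import Mathlib

/-- The message space: eight bits `(x1, x2, y1, y2, z1, z2, t1, t2)` over the
binary field. -/
abbrev Msg : Type :=
  ZMod 2 × ZMod 2 × ZMod 2 × ZMod 2 × ZMod 2 × ZMod 2 × ZMod 2 × ZMod 2

/-- The content of a node: three bits. -/
abbrev NodeContent : Type := ZMod 2 × ZMod 2 × ZMod 2

/-- The binary encoding of Table I: node contents
`n1 = (x1, x2, y1+z2+t1+t2)`, `n2 = (y1, y2, z1+t2+x1+x2)`,
`n3 = (z1, z2, t1+x2+y1+y2)`, `n4 = (t1, t2, x1+y2+z1+z2)`. -/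
def node : Fin 4 → Msg → NodeContent
  | 0, (x1, x2, y1, _y2, _z1, z2, t1, t2) => (x1, x2, y1 + z2 + t1 + t2)
  | 1, (x1, x2, y1, y2, z1, _z2, _t1, t2) => (y1, y2, z1 + t2 + x1 + x2)
  | 2, (_x1, x2, y1, y2, z1, z2, t1, _t2) => (z1, z2, t1 + x2 + y1 + y2)
  | 3, (x1, _x2, _y1, y2, z1, z2, t1, t2) => (t1, t2, x1 + y2 + z1 + z2)

/-- The two bits node 2 transmits to repair node 1: with stored content
`n2 = (y1, y2, z1+t2+x1+x2)`, transmit `(y1, z1+t2+x1+x2+y1+y2)`. -/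
def g2 : NodeContent → ZMod 2 × ZMod 2 := fun (a, b, c) => (a, c + a + b)

/-- The two bits node 3 transmits to repair node 1: with stored content
`n3 = (z1, z2, t1+x2+y1+y2)`, transmit `(z2, t1+x2+y1+y2+z1+z2)`. -/
def g3 : NodeContent → ZMod 2 × ZMod 2 := fun (a, b, c) => (b, c + a + b)

/-- The two bits node 4 transmits to repair node 1: with stored content
`n4 = (t1, t2, x1+y2+z1+z2)`, transmit `(t1+t2, x1+y2+z1+z2+t2)`. -/
def g4 : NodeContent → ZMod 2 × ZMod 2 := fun (a, b, c) => (a + b, c + b)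

def hdec : (ZMod 2 × ZMod 2) × (ZMod 2 × ZMod 2) × (ZMod 2 × ZMod 2) → NodeContent :=
  fun ((a1, a2), (b1, b2), (c1, c2)) =>
    (a2 + b2 + b1 + c1, a2 + c2 + a1 + b1, a1 + b1 + c1)

lemma repair : ∀ m : Msg, hdec (g2 (node 1 m), g3 (node 2 m), g4 (node 3 m)) = node 0 m := by
  rintro ⟨x1, x2, y1, y2, z1, z2, t1, t2⟩
  simp only [node, g2, g3, g4, hdec, Prod.mk.injEq]
  refine ⟨?_, ?_, ?_⟩ <;> ring_nf <;>
    fin_cases x1 <;> fin_cases x2 <;> fin_cases y1 <;> fin_cases y2 <;>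
    fin_cases z1 <;> fin_cases z2 <;> fin_cases t1 <;> fin_cases t2 <;> rfl

/-- Exact repair of node 1: there exist repair-encoding functions
`g2', g3', g4'` (each a function of the respective node's stored content alone)
and a repair-decoding function `h` recovering node 1's content; moreover one
may take `g2', g3', g4'` to be the particular maps `g2, g3, g4` above. -/
theorem statement11 :
    (∃ (g2' g3' g4' : NodeContent → ZMod 2 × ZMod 2)
        (h : (ZMod 2 × ZMod 2) × (ZMod 2 × ZMod 2) × (ZMod 2 × ZMod 2) →
          NodeContent),
        ∀ m : Msg, h (g2' (node 1 m), g3' (node 2 m), g4' (node 3 m)) =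
          node 0 m) ∧
    (∃ h : (ZMod 2 × ZMod 2) × (ZMod 2 × ZMod 2) × (ZMod 2 × ZMod 2) →
        NodeContent,
        ∀ m : Msg, h (g2 (node 1 m), g3 (node 2 m), g4 (node 3 m)) =
          node 0 m) := by
  exact ⟨⟨g2, g3, g4, hdec, repair⟩, ⟨hdec, repair⟩⟩
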